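/- Let x, y be a heavy pair. If G \ {x,y} is disconnected, then y lies on the path π_x(s,H_x) and x lies on the path π_y(s,H_y), where H_x and H_y are the heavy components of x and y respectively. -/

import Mathlib

/-- A rooted spanning tree of the graph `G`, given by a root and a parent function:
the root is a fixed point of `parent`, every vertex reaches the root by iterating
`parent`, and every (parent, child) pair is an edge of `G`. -/
structure RSTree {V : Type*} (G : SimpleGraph V) where
  root : V
  parent : V → V
  parent_root : parent root = root
  reaches : ∀ v : V, ∃ n : ℕ, parent^[n] v = root
  adj : ∀ v : V, v ≠ root → G.Adj (parent v) v

namespace RSTree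

variable {V : Type*} {G : SimpleGraph V}

/-- `u` is an ancestor of `v` in `T`, i.e. `u` lies on the tree path `π(root, v)`;
includes `u = v`. -/
def Anc (T : RSTree G) (u v : V) : Prop := ∃ n : ℕ, T.parent^[n] v = u

/-- The vertex set `V(T_x)` of the subtree of `T` rooted at `x`. -/
def sub (T : RSTree G) (x : V) : Set V := {v | T.Anc x v}

/-- `c` is a child of `v` in `T`. -/
def IsChild (T : RSTree G) (c v : V) : Prop := T.parent c = v ∧ c ≠ v

/-- `V_x = V(T_x) \ {x}`. -/
def Vx (T : RSTree G) (x : V) : Set V := {v | T.Anc x v ∧ v ≠ x}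

end RSTree

/-- `v` and `w` are connected by a walk of `G` all of whose vertices lie in `S`
(i.e. they lie in the same connected component of the induced subgraph `G[S]`). -/
def ReachableWithin {V : Type*} (G : SimpleGraph V) (S : Set V) (v w : V) : Prop :=
  ∃ p : G.Walk v w, ∀ u ∈ p.support, u ∈ S

/-- `C` is (the vertex set of) a connected component of the induced subgraph `G[S]`. -/
def IsCompOf {V : Type*} (G : SimpleGraph V) (S : Set V) (C : Set V) : Prop :=
  ∃ v ∈ S, C = {w | ReachableWithin G S v w}

/-- The connected component of `v` in the induced subgraph `G[S]` (as a vertex set). -/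
def CompOfVert {V : Type*} (G : SimpleGraph V) (S : Set V) (v : V) : Set V :=
  {w | ReachableWithin G S v w}

/-- The vertex set of the path `π_x(s,C) = π(s, u_C) ∘ (u_C, v_C)` associated to a
component `C` (given the choice functions `uc, vc` of the edge `(u_C, v_C)`): it
consists of all ancestors of `u_C` together with `v_C`. -/
def CompPath {V : Type*} {G : SimpleGraph V} (T : RSTree G)
    (uc vc : Set V → V) (C : Set V) : Set V :=
  {w | T.Anc w (uc C)} ∪ {vc C}

/-- `C ∈ 𝒞_x` is pseudo-`y`-sensitive: the path `π_x(s,C)` contains a tree edge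
`(y, y')` from `y` to a child `y'` of `y` such that `x` does not lie on
`π_y(s, C_{y,y'})`. Here `ucx, vcx` are the edge choices for components of `G[V_x]`
and `ucy, vcy` those for components of `G[V_y]`. -/
def PseudoSens {V : Type*} {G : SimpleGraph V} (T : RSTree G)
    (ucx vcx ucy vcy : Set V → V) (x y : V) (C : Set V) : Prop :=
  ∃ y', T.IsChild y' y ∧ T.Anc y' (ucx C) ∧
    x ∉ CompPath T ucy vcy (CompOfVert G (T.Vx y) y')

/-- `C ∈ 𝒞_x` is fully-`y`-sensitive: `y` lies on `π_x(s,C)` (i.e. `C` is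
`y`-sensitive) and `C` is not pseudo-`y`-sensitive. -/
def FullySens {V : Type*} {G : SimpleGraph V} (T : RSTree G)
    (ucx vcx ucy vcy : Set V → V) (x y : V) (C : Set V) : Prop :=
  y ∈ CompPath T ucx vcx C ∧ ¬ PseudoSens T ucx vcx ucy vcy x y C

/-- `hch` is a valid designation of heavy children: for every non-leaf vertex `v`,
`hch v` is a child of `v` whose subtree has the maximum number of vertices among all
children of `v`. -/
def HchValid {V : Type*} {G : SimpleGraph V} (T : RSTree G) (hch : V → V) : Prop :=
  ∀ v : V, (∃ c, T.IsChild c v) →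
    T.IsChild (hch v) v ∧ ∀ c, T.IsChild c v → (T.sub c).ncard ≤ (T.sub (hch v)).ncard

/-- The family `uc, vc` of edge choices is valid: for every `x ≠ s` with `G \ {x}`
connected and every connected component `C` of `G[V_x]`, `(uc x C, vc x C)` is an edge
of `G` with `vc x C ∈ C` and `uc x C ∉ V(T_x)`. -/
def GoodChoice {V : Type*} (G : SimpleGraph V) (T : RSTree G)
    (uc vc : V → Set V → V) : Prop :=
  ∀ x : V, x ≠ T.root → (G.induce (({x} : Set V)ᶜ)).Connected →
    ∀ C, IsCompOf G (T.Vx x) C →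
      G.Adj (uc x C) (vc x C) ∧ vc x C ∈ C ∧ uc x C ∉ T.sub x

/-- `x, y` is a heavy pair: an independent pair, both non-leaves of `T`, both `≠ s`,
with `G \ {x}` and `G \ {y}` connected, such that every fully-`y`-sensitive component
`C ∈ FS(x,y)` has the tree edge `(y, y_h)` on `π_x(s,C)` and every fully-`x`-sensitive
component `C ∈ FS(y,x)` has the tree edge `(x, x_h)` on `π_y(s,C)`. -/
def HeavyPair {V : Type*} {G : SimpleGraph V} (T : RSTree G) (hch : V → V)
    (uc vc : V → Set V → V) (x y : V) : Prop :=
  x ≠ T.root ∧ y ≠ T.root ∧ ¬ T.Anc x y ∧ ¬ T.Anc y x ∧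
  T.IsChild (hch x) x ∧ T.IsChild (hch y) y ∧
  (G.induce (({x} : Set V)ᶜ)).Connected ∧ (G.induce (({y} : Set V)ᶜ)).Connected ∧
  (∀ C, IsCompOf G (T.Vx x) C → FullySens T (uc x) (vc x) (uc y) (vc y) x y C →
    T.Anc (hch y) (uc x C)) ∧
  (∀ C, IsCompOf G (T.Vx y) C → FullySens T (uc y) (vc y) (uc x) (vc x) y x C →
    T.Anc (hch x) (uc y C))


section Aux

open SimpleGraph

variable {V : Type*} {G : SimpleGraph V}

namespace RSTree

lemma anc_refl (T : RSTree G) (a : V) : T.Anc a a := ⟨0, rfl⟩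

lemma anc_trans (T : RSTree G) {a b c : V} (h1 : T.Anc a b) (h2 : T.Anc b c) :
    T.Anc a c := by
  obtain ⟨n, hn⟩ := h1
  obtain ⟨m, hm⟩ := h2
  exact ⟨n + m, by rw [Function.iterate_add_apply, hm, hn]⟩

lemma root_fix (T : RSTree G) (k : ℕ) : T.parent^[k] T.root = T.root :=
  Function.iterate_fixed T.parent_root k

lemma eq_root_of_cycle (T : RSTree G) {k : ℕ} {v : V} (hk : T.parent^[k] v = v)
    (hk0 : k ≠ 0) : v = T.root := by
  obtain ⟨n, hn⟩ := T.reaches v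
  have h1 : T.parent^[k * n] v = v := by
    rw [Function.iterate_mul]
    exact Function.iterate_fixed hk n
  have hle : n ≤ k * n := Nat.le_mul_of_pos_left n (Nat.pos_of_ne_zero hk0)
  have h2 : T.parent^[(k * n - n) + n] v = T.root := by
    rw [Function.iterate_add_apply, hn, T.root_fix]
  rw [Nat.sub_add_cancel hle] at h2
  rw [← h1, h2]

lemma anc_antisymm (T : RSTree G) {a b : V} (h1 : T.Anc a b) (h2 : T.Anc b a) :
    a = b := by
  obtain ⟨n, hn⟩ := h1
  obtain ⟨m, hm⟩ := h2
  rcases Nat.eq_zero_or_pos (m + n) with h | h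
  · have hn0 : n = 0 := by omega
    subst hn0
    simpa using hn.symm
  · have hcyc : T.parent^[m + n] b = b := by
      rw [Function.iterate_add_apply, hn, hm]
    have hb : b = T.root := T.eq_root_of_cycle hcyc (by omega)
    subst hb
    rw [← hn, T.root_fix]

lemma anc_child (T : RSTree G) {c p : V} (h : T.IsChild c p) : T.Anc p c :=
  ⟨1, by simpa using h.1⟩

lemma walk_iter (T : RSTree G) (n : ℕ) (b : V) :
    ∃ p : G.Walk (T.parent^[n] b) b, ∀ u ∈ p.support, ∃ k, k ≤ n ∧ T.parent^[k] b = u := by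
  induction n generalizing b with
  | zero =>
    refine ⟨SimpleGraph.Walk.nil, ?_⟩
    intro u hu
    change u ∈ [b] at hu
    simp only [SimpleGraph.Walk.support_nil, List.mem_singleton] at hu
    subst hu
    exact ⟨0, Nat.zero_le _, rfl⟩
  | succ n ih =>
    by_cases hb : b = T.root
    · subst hb
      rw [T.root_fix]
      refine ⟨SimpleGraph.Walk.nil, ?_⟩
      intro u hu
      simp only [SimpleGraph.Walk.support_nil, List.mem_singleton] at hu
      subst hu
      exact ⟨0, Nat.zero_le _, rfl⟩
    · obtain ⟨p, hp⟩ := ih (T.parent b)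
      rw [Function.iterate_succ_apply]
      refine ⟨p.concat (T.adj b hb), ?_⟩
      intro u hu
      rw [SimpleGraph.Walk.support_concat, List.mem_append,
        List.mem_singleton] at hu
      rcases hu with hu | hu
      · obtain ⟨k, hk, hku⟩ := hp u hu
        exact ⟨k + 1, Nat.succ_le_succ hk, by rw [Function.iterate_succ_apply]; exact hku⟩
      · subst hu
        exact ⟨0, Nat.zero_le _, rfl⟩

lemma walk_anc (T : RSTree G) {a b : V} (h : T.Anc a b) :
    ∃ p : G.Walk a b, ∀ u ∈ p.support, T.Anc a u ∧ T.Anc u b := by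
  obtain ⟨n, hn⟩ := h
  subst hn
  obtain ⟨p, hp⟩ := T.walk_iter n b
  refine ⟨p, ?_⟩
  intro u hu
  obtain ⟨k, hk, hku⟩ := hp u hu
  refine ⟨⟨n - k, ?_⟩, ⟨k, hku⟩⟩
  rw [← hku, ← Function.iterate_add_apply, Nat.sub_add_cancel hk]

end RSTree

lemma ReachableWithin.mem_left {S : Set V} {v w : V} (h : ReachableWithin G S v w) :
    v ∈ S := by
  obtain ⟨p, hp⟩ := h
  exact hp v p.start_mem_support

lemma ReachableWithin.mem_right {S : Set V} {v w : V} (h : ReachableWithin G S v w) :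
    w ∈ S := by
  obtain ⟨p, hp⟩ := h
  exact hp w p.end_mem_support

lemma reachableWithin_refl {S : Set V} {v : V} (hv : v ∈ S) : ReachableWithin G S v v := by
  refine ⟨SimpleGraph.Walk.nil, ?_⟩
  intro u hu
  simp only [SimpleGraph.Walk.support_nil, List.mem_singleton] at hu
  subst hu
  exact hv

lemma ReachableWithin.symm {S : Set V} {v w : V} (h : ReachableWithin G S v w) :
    ReachableWithin G S w v := by
  obtain ⟨p, hp⟩ := h
  refine ⟨p.reverse, ?_⟩
  intro u hu
  rw [SimpleGraph.Walk.support_reverse, List.mem_reverse] at hu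
  exact hp u hu

lemma ReachableWithin.trans {S : Set V} {v w u : V} (h1 : ReachableWithin G S v w)
    (h2 : ReachableWithin G S w u) : ReachableWithin G S v u := by
  obtain ⟨p, hp⟩ := h1
  obtain ⟨q, hq⟩ := h2
  refine ⟨p.append q, ?_⟩
  intro a ha
  rw [SimpleGraph.Walk.support_append, List.mem_append] at ha
  rcases ha with ha | ha
  · exact hp a ha
  · exact hq a (List.mem_of_mem_tail ha)

lemma ReachableWithin.mono {S S' : Set V} {v w : V} (h : ReachableWithin G S v w)
    (hs : S ⊆ S') : ReachableWithin G S' v w := by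
  obtain ⟨p, hp⟩ := h
  exact ⟨p, fun u hu => hs (hp u hu)⟩

lemma reachableWithin_adj {S : Set V} {v w : V} (h : G.Adj v w) (hv : v ∈ S) (hw : w ∈ S) :
    ReachableWithin G S v w := by
  refine ⟨SimpleGraph.Walk.cons h SimpleGraph.Walk.nil, ?_⟩
  intro u hu
  simp only [SimpleGraph.Walk.support_cons, SimpleGraph.Walk.support_nil,
    List.mem_cons, List.mem_singleton, List.not_mem_nil, or_false] at hu
  rcases hu with rfl | rfl <;> assumption

lemma reachableWithin_of_anc (T : RSTree G) {S : Set V} {a b : V} (h : T.Anc a b)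
    (hS : ∀ u, T.Anc a u → T.Anc u b → u ∈ S) : ReachableWithin G S a b := by
  obtain ⟨p, hp⟩ := T.walk_anc h
  exact ⟨p, fun u hu => hS u (hp u hu).1 (hp u hu).2⟩

lemma reachableWithin_root (T : RSTree G) {x y u : V} (hx : ¬ T.Anc x u)
    (hy : ¬ T.Anc y u) : ReachableWithin G (({x, y} : Set V)ᶜ) T.root u := by
  obtain ⟨n, hn⟩ := T.reaches u
  refine reachableWithin_of_anc T ⟨n, hn⟩ ?_
  intro w _ hw2
  simp only [Set.mem_compl_iff, Set.mem_insert_iff, Set.mem_singleton_iff]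
  rintro (rfl | rfl)
  · exact hx hw2
  · exact hy hw2

lemma compOfVert_subset {S : Set V} {v : V} : CompOfVert G S v ⊆ S :=
  fun _ hw => ReachableWithin.mem_right hw

lemma reachableWithin_of_mem_comp {S : Set V} {v a b : V}
    (ha : a ∈ CompOfVert G S v) (hb : b ∈ CompOfVert G S v) : ReachableWithin G S a b :=
  ReachableWithin.trans (ReachableWithin.symm ha) hb

lemma RSTree.mem_comp_of_anc (T : RSTree G) {c p u : V} (hc : T.IsChild c p)
    (h : T.Anc c u) : u ∈ CompOfVert G (T.Vx p) c := by
  refine reachableWithin_of_anc T h ?_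
  intro w hw1 _
  refine ⟨T.anc_trans (T.anc_child hc) hw1, ?_⟩
  rintro rfl
  exact hc.2 (T.anc_antisymm hw1 (T.anc_child hc))

lemma RSTree.vx_subset_compl (T : RSTree G) {x y : V} (hax : ¬ T.Anc x y) :
    T.Vx x ⊆ (({x, y} : Set V)ᶜ) := by
  rintro w ⟨hanc, hne⟩
  simp only [Set.mem_compl_iff, Set.mem_insert_iff, Set.mem_singleton_iff]
  rintro (rfl | rfl)
  · exact hne rfl
  · exact hax hanc

lemma comp_reach_of_uc (T : RSTree G) {uc vc : V → Set V → V}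
    (hgood : GoodChoice G T uc vc) {x y : V} (hxr : x ≠ T.root)
    (hxc : (G.induce (({x} : Set V)ᶜ)).Connected) (hax : ¬ T.Anc x y) {v : V}
    (hv : v ∈ T.Vx x)
    (hu : ReachableWithin G (({x, y} : Set V)ᶜ) T.root (uc x (CompOfVert G (T.Vx x) v))) :
    ∀ w ∈ CompOfVert G (T.Vx x) v, ReachableWithin G (({x, y} : Set V)ᶜ) T.root w := by
  obtain ⟨hadj, hvc, -⟩ := hgood x hxr hxc _ ⟨v, hv, rfl⟩
  intro w hw
  have hvcS : vc x (CompOfVert G (T.Vx x) v) ∈ (({x, y} : Set V)ᶜ) :=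
    T.vx_subset_compl hax (compOfVert_subset hvc)
  have h1 := ReachableWithin.trans hu (reachableWithin_adj hadj hu.mem_right hvcS)
  exact ReachableWithin.trans h1
    (ReachableWithin.mono (reachableWithin_of_mem_comp hvc hw) (T.vx_subset_compl hax))

lemma comp_reach_of_not_sens (T : RSTree G) {uc vc : V → Set V → V}
    (hgood : GoodChoice G T uc vc) {x y : V} (hxr : x ≠ T.root)
    (hxc : (G.induce (({x} : Set V)ᶜ)).Connected) (hax : ¬ T.Anc x y) {v : V}
    (hv : v ∈ T.Vx x) (hns : ¬ T.Anc y (uc x (CompOfVert G (T.Vx x) v))) :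
    ∀ w ∈ CompOfVert G (T.Vx x) v, ReachableWithin G (({x, y} : Set V)ᶜ) T.root w := by
  obtain ⟨-, -, huc⟩ := hgood x hxr hxc _ ⟨v, hv, rfl⟩
  exact comp_reach_of_uc T hgood hxr hxc hax hv
    (reachableWithin_root T (fun h => huc h) hns)

lemma comp_reach_of_pseudo (T : RSTree G) {uc vc : V → Set V → V}
    (hgood : GoodChoice G T uc vc) {x y : V} (hxr : x ≠ T.root) (hyr : y ≠ T.root)
    (hxc : (G.induce (({x} : Set V)ᶜ)).Connected)
    (hyc : (G.induce (({y} : Set V)ᶜ)).Connected)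
    (hax : ¬ T.Anc x y) (hay : ¬ T.Anc y x) {v : V} (hv : v ∈ T.Vx x)
    (hps : PseudoSens T (uc x) (vc x) (uc y) (vc y) x y (CompOfVert G (T.Vx x) v)) :
    ∀ w ∈ CompOfVert G (T.Vx x) v, ReachableWithin G (({x, y} : Set V)ᶜ) T.root w := by
  obtain ⟨y', hchild, hancu, hxnot⟩ := hps
  have hy'v : y' ∈ T.Vx y := ⟨T.anc_child hchild, hchild.2⟩
  have hnx : ¬ T.Anc x (uc y (CompOfVert G (T.Vx y) y')) :=
    fun h => hxnot (Set.mem_union_left _ h)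
  have hC' := comp_reach_of_not_sens T hgood hyr hyc hay hy'v hnx
  rw [Set.pair_comm y x] at hC'
  have humem : uc x (CompOfVert G (T.Vx x) v) ∈ CompOfVert G (T.Vx y) y' :=
    T.mem_comp_of_anc hchild hancu
  exact comp_reach_of_uc T hgood hxr hxc hax hv (hC' _ humem)

lemma comp_reach_tri (T : RSTree G) {uc vc : V → Set V → V} {hch : V → V}
    (hgood : GoodChoice G T uc vc) {x y : V} (hxr : x ≠ T.root) (hyr : y ≠ T.root)
    (hxc : (G.induce (({x} : Set V)ᶜ)).Connected)
    (hyc : (G.induce (({y} : Set V)ᶜ)).Connected)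
    (hax : ¬ T.Anc x y) (hay : ¬ T.Anc y x) (hchy : T.IsChild (hch y) y)
    (hful : ∀ C, IsCompOf G (T.Vx x) C →
      FullySens T (uc x) (vc x) (uc y) (vc y) x y C → T.Anc (hch y) (uc x C))
    (hHy : ∀ w ∈ CompOfVert G (T.Vx y) (hch y),
      ReachableWithin G (({x, y} : Set V)ᶜ) T.root w)
    {v : V} (hv : v ∈ T.Vx x) :
    ∀ w ∈ CompOfVert G (T.Vx x) v, ReachableWithin G (({x, y} : Set V)ᶜ) T.root w := by
  by_cases hs : T.Anc y (uc x (CompOfVert G (T.Vx x) v))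
  · by_cases hps : PseudoSens T (uc x) (vc x) (uc y) (vc y) x y (CompOfVert G (T.Vx x) v)
    · exact comp_reach_of_pseudo T hgood hxr hyr hxc hyc hax hay hv hps
    · have hanc := hful _ ⟨v, hv, rfl⟩ ⟨Set.mem_union_left _ hs, hps⟩
      have humem := T.mem_comp_of_anc hchy hanc
      exact comp_reach_of_uc T hgood hxr hxc hax hv (hHy _ humem)
  · exact comp_reach_of_not_sens T hgood hxr hxc hax hv hs

lemma walk_induce {S : Set V} :
    ∀ {v w : V} (p : G.Walk v w) (hp : ∀ u ∈ p.support, u ∈ S),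
    (G.induce S).Reachable ⟨v, hp v p.start_mem_support⟩ ⟨w, hp w p.end_mem_support⟩ := by
  intro v w p
  induction p with
  | nil =>
    intro hp
    exact SimpleGraph.Reachable.refl _
  | @cons a b c h q ih =>
    intro hp
    have hb : ∀ u ∈ q.support, u ∈ S := fun u hu => hp u (by
      rw [SimpleGraph.Walk.support_cons]
      exact List.mem_cons_of_mem _ hu)
    have ha : a ∈ S := hp a (SimpleGraph.Walk.start_mem_support _)
    have hadj : (G.induce S).Adj ⟨a, ha⟩ ⟨b, hb b q.start_mem_support⟩ := h
    exact SimpleGraph.Reachable.trans hadj.reachable (ih hb)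

lemma main_aux (T : RSTree G) {uc vc : V → Set V → V} {hch : V → V}
    (hgood : GoodChoice G T uc vc) {x y : V}
    (hxr : x ≠ T.root) (hyr : y ≠ T.root) (hax : ¬ T.Anc x y) (hay : ¬ T.Anc y x)
    (hchx : T.IsChild (hch x) x) (hchy : T.IsChild (hch y) y)
    (hxc : (G.induce (({x} : Set V)ᶜ)).Connected)
    (hyc : (G.induce (({y} : Set V)ᶜ)).Connected)
    (hfx : ∀ C, IsCompOf G (T.Vx x) C →
      FullySens T (uc x) (vc x) (uc y) (vc y) x y C → T.Anc (hch y) (uc x C))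
    (hfy : ∀ C, IsCompOf G (T.Vx y) C →
      FullySens T (uc y) (vc y) (uc x) (vc x) y x C → T.Anc (hch x) (uc y C))
    (hnot : ¬ T.Anc y (uc x (CompOfVert G (T.Vx x) (hch x)))) :
    (G.induce (({x, y} : Set V)ᶜ)).Connected := by
  have hchxv : hch x ∈ T.Vx x := ⟨T.anc_child hchx, hchx.2⟩
  have hchyv : hch y ∈ T.Vx y := ⟨T.anc_child hchy, hchy.2⟩
  have hHx : ∀ w ∈ CompOfVert G (T.Vx x) (hch x),
      ReachableWithin G (({x, y} : Set V)ᶜ) T.root w :=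
    comp_reach_of_not_sens T hgood hxr hxc hax hchxv hnot
  have hHx' : ∀ w ∈ CompOfVert G (T.Vx x) (hch x),
      ReachableWithin G (({y, x} : Set V)ᶜ) T.root w := by
    rw [Set.pair_comm y x]
    exact hHx
  have hHy' : ∀ w ∈ CompOfVert G (T.Vx y) (hch y),
      ReachableWithin G (({y, x} : Set V)ᶜ) T.root w :=
    comp_reach_tri T hgood hyr hxr hyc hxc hay hax hchx hfy hHx' hchyv
  have hHy : ∀ w ∈ CompOfVert G (T.Vx y) (hch y),
      ReachableWithin G (({x, y} : Set V)ᶜ) T.root w := by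
    rw [← Set.pair_comm y x]
    exact hHy'
  have hrootS : T.root ∈ (({x, y} : Set V)ᶜ) := by
    simp only [Set.mem_compl_iff, Set.mem_insert_iff, Set.mem_singleton_iff]
    rintro (rfl | rfl)
    · exact hxr rfl
    · exact hyr rfl
  have hall : ∀ v ∈ (({x, y} : Set V)ᶜ), ReachableWithin G (({x, y} : Set V)ᶜ) T.root v := by
    intro v hv
    have hvxy : v ≠ x ∧ v ≠ y := by
      constructor <;> rintro rfl <;>
        simp only [Set.mem_compl_iff, Set.mem_insert_iff, Set.mem_singleton_iff] at hv <;>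
        exact hv (by tauto)
    by_cases h1 : T.Anc x v
    · exact comp_reach_tri T hgood hxr hyr hxc hyc hax hay hchy hfx hHy
        ⟨h1, hvxy.1⟩ v (reachableWithin_refl ⟨h1, hvxy.1⟩)
    · by_cases h2 : T.Anc y v
      · have := comp_reach_tri T hgood hyr hxr hyc hxc hay hax hchx hfy hHx'
          ⟨h2, hvxy.2⟩ v (reachableWithin_refl ⟨h2, hvxy.2⟩)
        rwa [Set.pair_comm y x] at this
      · exact reachableWithin_root T h1 h2
  rw [SimpleGraph.connected_iff]
  refine ⟨?_, ⟨⟨T.root, hrootS⟩⟩⟩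
  rintro ⟨a, ha⟩ ⟨b, hb⟩
  obtain ⟨p, hp⟩ := hall a ha
  obtain ⟨q, hq⟩ := hall b hb
  exact SimpleGraph.Reachable.trans (SimpleGraph.Reachable.symm (walk_induce p hp))
    (walk_induce q hq)

end Aux

/-- Let `x, y` be a heavy pair. If `G \ {x,y}` is disconnected, then
`y` lies on the path `π_x(s, H_x)` and `x` lies on the path `π_y(s, H_y)`, where `H_x`
and `H_y` are the heavy components of `x` and `y` (the components of `G[V_x]`, resp.
`G[V_y]`, containing the heavy child `x_h`, resp. `y_h`). -/
theorem stmt11 {V : Type*} [Fintype V] (G : SimpleGraph V) (hG : G.Connected)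
    (T : RSTree G) (hch : V → V) (hhch : HchValid T hch)
    (uc vc : V → Set V → V) (hgood : GoodChoice G T uc vc)
    (x y : V) (hxy : HeavyPair T hch uc vc x y)
    (hdis : ¬ (G.induce (({x, y} : Set V)ᶜ)).Connected) :
    y ∈ CompPath T (uc x) (vc x) (CompOfVert G (T.Vx x) (hch x)) ∧
    x ∈ CompPath T (uc y) (vc y) (CompOfVert G (T.Vx y) (hch y)) := by
  obtain ⟨hxr, hyr, hax, hay, hchx, hchy, hxc, hyc, hfx, hfy⟩ := hxy
  constructor
  · by_contra hmem
    have hnot : ¬ T.Anc y (uc x (CompOfVert G (T.Vx x) (hch x))) :=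
      fun h => hmem (Set.mem_union_left _ h)
    exact hdis (main_aux T hgood hxr hyr hax hay hchx hchy hxc hyc hfx hfy hnot)
  · by_contra hmem
    have hnot : ¬ T.Anc x (uc y (CompOfVert G (T.Vx y) (hch y))) :=
      fun h => hmem (Set.mem_union_left _ h)
    rw [Set.pair_comm x y] at hdis
    exact hdis (main_aux T hgood hyr hxr hay hax hchy hchx hyc hxc hfy hfx hnot)
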